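/- Let μ_x, μ_y > 0, L′_xx > 0, L_yx > 0 and β ∈ (0,1]. Define θ̄₁ = 1 − (β·μ_y·L′_xx/(2·L_yx²))·(√(1 + 4·L_yx²·μ_x/(β·L′_xx²·μ_y)) − 1). Then for every θ ∈ (0,1) with θ ≥ θ̄₁ one has μ_x/(1−θ) − L′_xx ≥ (1−θ)·L_yx²/(β·μ_y). -/

import Mathlib

/-- Primal-stepsize condition: with
`θ̄₁ = 1 − (β μ_y L′_xx/(2 L_yx²))(√(1 + 4 L_yx² μ_x/(β L′_xx² μ_y)) − 1)`,
every `θ ∈ (0,1)` with `θ ≥ θ̄₁` satisfies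
`μ_x/(1−θ) − L′_xx ≥ (1−θ) L_yx²/(β μ_y)`. -/
theorem primal_stepsize_condition
    (μx μy L'xx Lyx β : ℝ)
    (hμx : 0 < μx) (hμy : 0 < μy) (hL'xx : 0 < L'xx) (hLyx : 0 < Lyx)
    (hβ0 : 0 < β) (hβ1 : β ≤ 1)
    (θbar1 : ℝ)
    (hθbar1 : θbar1 =
      1 - β * μy * L'xx / (2 * Lyx ^ 2) *
        (Real.sqrt (1 + 4 * Lyx ^ 2 * μx / (β * L'xx ^ 2 * μy)) - 1)) :
    ∀ θ : ℝ, 0 < θ → θ < 1 → θbar1 ≤ θ →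
      (1 - θ) * Lyx ^ 2 / (β * μy) ≤ μx / (1 - θ) - L'xx := by
  intro θ hθ0 hθ1 hθb
  set a : ℝ := Lyx ^ 2 / (β * μy) with ha
  have hβμ : 0 < β * μy := mul_pos hβ0 hμy
  have ha0 : 0 < a := div_pos (pow_pos hLyx 2) hβμ
  set t : ℝ := 1 - θ with htdef
  have ht0 : 0 < t := by simp only [htdef]; linarith
  set s : ℝ := Real.sqrt (L'xx ^ 2 + 4 * a * μx) with hs
  have hs0 : 0 ≤ s := Real.sqrt_nonneg _
  have hssq : s ^ 2 = L'xx ^ 2 + 4 * a * μx := by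
    rw [hs, Real.sq_sqrt]; positivity
  -- rewrite the sqrt in θbar1
  have hsqrt : Real.sqrt (1 + 4 * Lyx ^ 2 * μx / (β * L'xx ^ 2 * μy)) = s / L'xx := by
    rw [show (1 + 4 * Lyx ^ 2 * μx / (β * L'xx ^ 2 * μy)) = (L'xx ^ 2 + 4 * a * μx) / L'xx ^ 2 by
      rw [ha]; field_simp]
    rw [Real.sqrt_div (by positivity), Real.sqrt_sq hL'xx.le]
  -- t ≤ (s - L'xx)/(2a)
  have hkey : 2 * a * t ≤ s - L'xx := by
    have h1 : t ≤ 1 - θbar1 := by simp only [htdef]; linarith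
    rw [hθbar1, hsqrt] at h1
    have h2 : β * μy * L'xx / (2 * Lyx ^ 2) * (s / L'xx - 1) = (s - L'xx) / (2 * a) := by
      rw [ha]; field_simp
    rw [h2] at h1
    simp only [sub_sub_cancel] at h1
    calc 2 * a * t ≤ 2 * a * ((s - L'xx) / (2 * a)) := by
          exact mul_le_mul_of_nonneg_left h1 (by positivity)
      _ = s - L'xx := by field_simp
  -- quadratic inequality: a t^2 + L'xx t ≤ μx
  have hquad : a * t ^ 2 + L'xx * t ≤ μx := by
    nlinarith [sq_nonneg (2 * a * t + L'xx), mul_pos ha0 ht0]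
  -- conclude
  have h3 : a * t ≤ μx / t - L'xx := by
    rw [le_sub_iff_add_le, ← sub_nonneg]
    have : μx / t - (a * t + L'xx) = (μx - (a * t ^ 2 + L'xx * t)) / t := by
      field_simp
    rw [this]
    apply div_nonneg (by linarith) ht0.le
  calc (1 - θ) * Lyx ^ 2 / (β * μy) = a * t := by rw [ha, htdef]; ring
    _ ≤ μx / t - L'xx := h3
    _ = μx / (1 - θ) - L'xx := by rw [htdef]
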